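/- Let 1 ≤ p ≤ ∞, 1 ≤ q < ∞, let φ : [0,∞) → ℝ be a weight with lim_{r→∞} r·φ'(r) = ∞, let δ > 1, and set ψ(r) = φ(r/δ). If (f_n) is a sequence of entire functions with sup_n ‖f_n‖_{p,q,ψ} < ∞ and f_n → 0 uniformly on every compact subset of ℂ, then lim_{n→∞} ‖f_n‖_{p,q,φ} = 0. -/

import Mathlib

open MeasureTheory Set Filter
open scoped ENNReal Topology

/-- The integral mean `M_p(f,r)` over the circle of radius `r`, with
`M_∞(f,r) = sup_{0≤θ≤2π} |f(r e^{iθ})|`. -/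
noncomputable def Mp (p : ℝ≥0∞) (f : ℂ → ℂ) (r : ℝ) : ℝ :=
  if p = ⊤ then
    sSup ((fun θ : ℝ => ‖f ((r:ℂ) * Complex.exp ((θ:ℂ) * Complex.I))‖) ''
      Set.Icc 0 (2 * Real.pi))
  else
    ((1 / (2 * Real.pi)) *
        ∫ θ in (0:ℝ)..(2 * Real.pi),
          ‖f ((r:ℂ) * Complex.exp ((θ:ℂ) * Complex.I))‖ ^ p.toReal) ^
      (1 / p.toReal)

/-- The weighted mixed norm `‖f‖_{p,q,φ}` (with values in `[0,∞]`), for `1 ≤ q < ∞`. -/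
noncomputable def mixedNorm (p : ℝ≥0∞) (q : ℝ) (φ : ℝ → ℝ) (f : ℂ → ℂ) : ℝ≥0∞ :=
  (∫⁻ r in Set.Ioi (0:ℝ), ENNReal.ofReal (Mp p f r ^ q * Real.exp (-q * φ r) * r)) ^ (1 / q)

lemma Mp_nonneg (p : ℝ≥0∞) (f : ℂ → ℂ) (r : ℝ) : 0 ≤ Mp p f r := by
  unfold Mp
  split
  · exact Real.sSup_nonneg fun x hx => by
      obtain ⟨θ, -, rfl⟩ := hx; positivity
  · apply Real.rpow_nonneg
    have : 0 ≤ ∫ θ in (0:ℝ)..(2 * Real.pi),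
        ‖f ((r:ℂ) * Complex.exp ((θ:ℂ) * Complex.I))‖ ^ p.toReal :=
      intervalIntegral.integral_nonneg (by positivity) (fun θ _ => by positivity)
    positivity

lemma Mp_le {p : ℝ≥0∞} (hp : 1 ≤ p) {f : ℂ → ℂ} (hf : Continuous f) {s r : ℝ}
    (hs : 0 ≤ s) (h : ∀ θ : ℝ, ‖f ((r:ℂ) * Complex.exp ((θ:ℂ) * Complex.I))‖ ≤ s) :
    Mp p f r ≤ s := by
  unfold Mp
  split
  · exact Real.sSup_le (fun x hx => by obtain ⟨θ, -, rfl⟩ := hx; exact h θ) hs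
  · rename_i hne
    have hpt : (1:ℝ) ≤ p.toReal := by
      simpa using ENNReal.toReal_mono hne hp
    have hpt0 : (0:ℝ) < p.toReal := lt_of_lt_of_le one_pos hpt
    have hcont : Continuous fun θ : ℝ =>
        ‖f ((r:ℂ) * Complex.exp ((θ:ℂ) * Complex.I))‖ ^ p.toReal := by
      apply Continuous.rpow_const
      · exact continuous_norm.comp (hf.comp (by continuity))
      · exact fun x => Or.inr hpt0.le
    have hint : ∫ θ in (0:ℝ)..(2 * Real.pi),
        ‖f ((r:ℂ) * Complex.exp ((θ:ℂ) * Complex.I))‖ ^ p.toReal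
        ≤ ∫ _ in (0:ℝ)..(2 * Real.pi), s ^ p.toReal := by
      apply intervalIntegral.integral_mono_on (by positivity)
        (hcont.intervalIntegrable _ _) intervalIntegrable_const
      intro x _
      exact Real.rpow_le_rpow (by positivity) (h x) hpt0.le
    rw [intervalIntegral.integral_const, smul_eq_mul] at hint
    have h2π : (0:ℝ) < 2 * Real.pi := by positivity
    calc ((1 / (2 * Real.pi)) *
        ∫ θ in (0:ℝ)..(2 * Real.pi),
          ‖f ((r:ℂ) * Complex.exp ((θ:ℂ) * Complex.I))‖ ^ p.toReal) ^ (1 / p.toReal)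
        ≤ (s ^ p.toReal) ^ (1 / p.toReal) := by
          apply Real.rpow_le_rpow
          · have : 0 ≤ ∫ θ in (0:ℝ)..(2 * Real.pi),
                ‖f ((r:ℂ) * Complex.exp ((θ:ℂ) * Complex.I))‖ ^ p.toReal :=
              intervalIntegral.integral_nonneg (by positivity) (fun θ _ => by positivity)
            positivity
          · rw [one_div, inv_mul_le_iff₀ h2π]
            linarith [hint]
          · positivity
      _ = s := by
          rw [← Real.rpow_mul hs, mul_one_div, div_self hpt0.ne', Real.rpow_one]

lemma phi_diff {φ : ℝ → ℝ} (hφ : ContDiff ℝ 1 φ) {δ M R₀ r : ℝ} (hδ : 1 < δ)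
    (hR₀ : 1 ≤ R₀)
    (hbound : ∀ t ≥ R₀, M ≤ t * deriv φ t) (hr : δ * R₀ ≤ r) :
    M * Real.log δ ≤ φ r - φ (r / δ) := by
  have hδ0 : (0:ℝ) < δ := lt_trans one_pos hδ
  have ha : R₀ ≤ r / δ := (le_div_iff₀ hδ0).mpr (by linarith [hr, mul_comm δ R₀])
  have ha0 : (0:ℝ) < r / δ := lt_of_lt_of_le (by linarith) ha
  have hab : r / δ ≤ r := by
    rw [div_le_iff₀ hδ0]
    nlinarith [mul_pos (lt_of_lt_of_le (mul_pos hδ0 (lt_of_lt_of_le one_pos hR₀)) hr)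
      (sub_pos.mpr hδ)]
  have hr0 : (0:ℝ) < r := lt_of_lt_of_le ha0 hab
  have hftc : ∫ t in (r/δ)..r, deriv φ t = φ r - φ (r / δ) :=
    intervalIntegral.integral_deriv_eq_sub
      (fun x _ => (hφ.differentiable one_ne_zero).differentiableAt)
      ((hφ.continuous_deriv le_rfl).intervalIntegrable _ _)
  have hmono : ∫ t in (r/δ)..r, M * (1 / t) ≤ ∫ t in (r/δ)..r, deriv φ t := by
    apply intervalIntegral.integral_mono_on hab
    · apply ContinuousOn.intervalIntegrable
      apply ContinuousOn.mul continuousOn_const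
      apply ContinuousOn.div continuousOn_const continuousOn_id
      intro x hx
      rw [uIcc_of_le hab] at hx
      exact ne_of_gt (lt_of_lt_of_le ha0 hx.1)
    · exact (hφ.continuous_deriv le_rfl).intervalIntegrable _ _
    · intro t ht
      have ht0 : 0 < t := lt_of_lt_of_le ha0 ht.1
      rw [mul_one_div, div_le_iff₀ ht0, mul_comm]
      exact hbound t (le_trans ha ht.1)
  have hcalc : ∫ t in (r/δ)..r, M * (1 / t) = M * Real.log δ := by
    rw [intervalIntegral.integral_const_mul, integral_one_div]
    · congr 1
      rw [div_div_eq_mul_div, mul_comm, mul_div_assoc, div_self hr0.ne', mul_one]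
    · rw [uIcc_of_le hab]
      intro hx
      exact absurd hx.1 (not_le.mpr ha0)
  linarith [hftc ▸ hmono, hcalc ▸ hmono]

theorem stmt14 (p : ℝ≥0∞) (hp : 1 ≤ p) (q : ℝ) (hq : 1 ≤ q)
    (φ : ℝ → ℝ) (hφ : ContDiff ℝ 1 φ) (hφpos : ∀ r ≥ (0:ℝ), 0 < φ r)
    (hφint : (∫⁻ r in Set.Ioi (0:ℝ), ENNReal.ofReal (Real.exp (-q * φ r) * r)) < ⊤)
    (hC : Tendsto (fun r => r * deriv φ r) atTop atTop)
    (δ : ℝ) (hδ : 1 < δ)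
    (f : ℕ → ℂ → ℂ) (hf : ∀ n, Differentiable ℂ (f n))
    (hbdd : (⨆ n : ℕ, mixedNorm p q (fun r => φ (r / δ)) (f n)) < ⊤)
    (hunif : ∀ K : Set ℂ, IsCompact K → TendstoUniformlyOn (fun n => f n) 0 atTop K) :
    Tendsto (fun n => mixedNorm p q φ (f n)) atTop (𝓝 0) := by
  have hq0 : (0:ℝ) < q := lt_of_lt_of_le one_pos hq
  set I : ℕ → ℝ≥0∞ := fun n => ∫⁻ r in Ioi (0:ℝ),
      ENNReal.ofReal (Mp p (f n) r ^ q * Real.exp (-q * φ r) * r) with hI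
  suffices hkey : Tendsto I atTop (𝓝 0) by
    have hc : Continuous fun x : ℝ≥0∞ => x ^ (1/q) := ENNReal.continuous_rpow_const
    have h2 : Tendsto (fun n => (I n) ^ (1/q)) atTop (𝓝 ((0:ℝ≥0∞) ^ (1/q))) :=
      (hc.tendsto 0).comp hkey
    have h0 : ((0:ℝ≥0∞)) ^ (1/q) = 0 := ENNReal.zero_rpow_of_pos (by positivity)
    rw [h0] at h2
    exact h2
  rw [ENNReal.tendsto_nhds_zero]
  intro ε hε
  set ε' := min ε 1 with hε'def
  have hε'0 : 0 < ε' := lt_min hε zero_lt_one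
  have hε'top : ε' ≠ ⊤ := ((min_le_right ε 1).trans_lt ENNReal.one_lt_top).ne
  suffices h : ∀ᶠ n in atTop, I n ≤ ε' from h.mono fun n hn => hn.trans (min_le_left _ _)
  have hhalf0 : ε' / 2 ≠ 0 := (ENNReal.div_pos hε'0.ne' ENNReal.ofNat_ne_top).ne'
  have hhalftop : ε' / 2 ≠ ⊤ := (ENNReal.div_lt_top hε'top (by norm_num)).ne
  -- bound on ψ-integrals
  set B := ⨆ n : ℕ, mixedNorm p q (fun r => φ (r / δ)) (f n) with hB
  have hIψ : ∀ n, (∫⁻ r in Ioi (0:ℝ),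
      ENNReal.ofReal (Mp p (f n) r ^ q * Real.exp (-q * φ (r / δ)) * r)) ≤ B ^ q := by
    intro n
    have h1 : mixedNorm p q (fun r => φ (r / δ)) (f n) ≤ B := le_iSup (fun k => mixedNorm p q (fun r => φ (r / δ)) (f k)) n
    have h2 := ENNReal.rpow_le_rpow h1 hq0.le
    rw [mixedNorm, ← ENNReal.rpow_mul, one_div, inv_mul_cancel₀ hq0.ne',
      ENNReal.rpow_one] at h2
    exact h2
  have hBq : B ^ q ≠ ⊤ := (ENNReal.rpow_lt_top_of_nonneg hq0.le hbdd.ne).ne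
  set A := ∫⁻ r in Ioi (0:ℝ), ENNReal.ofReal (Real.exp (-q * φ r) * r) with hA
  have hAtop : A ≠ ⊤ := hφint.ne
  -- tail constant
  set η : ℝ≥0∞ := ε' / 2 / (B ^ q + 1) with hηdef
  have hη0 : η ≠ 0 := (ENNReal.div_pos hhalf0 (by simp [hBq])).ne'
  have hηtop : η ≠ ⊤ := (ENNReal.div_lt_top hhalftop (by simp)).ne
  have hηt0 : 0 < η.toReal := ENNReal.toReal_pos hη0 hηtop
  set m : ℝ := min η.toReal 1 with hmdef
  have hm0 : 0 < m := lt_min hηt0 zero_lt_one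
  set L : ℝ := -(Real.log m) / q with hLdef
  have hexpL : Real.exp (-q * L) = m := by
    rw [hLdef]
    field_simp
    exact Real.exp_log hm0
  -- choose R₀ from hC
  obtain ⟨R₀', hR₀'⟩ := (hC.eventually_ge_atTop (L / Real.log δ)).exists_forall_of_atTop
  set R₀ : ℝ := max R₀' 1 with hR₀def
  have hR₀1 : (1:ℝ) ≤ R₀ := le_max_right _ _
  have hbound : ∀ t ≥ R₀, L / Real.log δ ≤ t * deriv φ t :=
    fun t ht => hR₀' t (le_trans (le_max_left _ _) ht)
  set R : ℝ := δ * R₀ with hRdef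
  have hR0 : (0:ℝ) < R := mul_pos (lt_trans one_pos hδ) (lt_of_lt_of_le one_pos hR₀1)
  have hlogδ : (0:ℝ) < Real.log δ := Real.log_pos hδ
  have hφdiff : ∀ r ≥ R, L ≤ φ r - φ (r / δ) := by
    intro r hr
    have := phi_diff hφ hδ hR₀1 hbound hr
    rwa [div_mul_cancel₀ _ hlogδ.ne'] at this
  -- tail estimate (for every n)
  have htail : ∀ n, (∫⁻ r in Ioi R,
      ENNReal.ofReal (Mp p (f n) r ^ q * Real.exp (-q * φ r) * r)) ≤ ε' / 2 := by
    intro n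
    have hpt : ∀ r ∈ Ioi R, ENNReal.ofReal (Mp p (f n) r ^ q * Real.exp (-q * φ r) * r)
        ≤ ENNReal.ofReal m * ENNReal.ofReal (Mp p (f n) r ^ q * Real.exp (-q * φ (r / δ)) * r) := by
      intro r hr
      have hr' : R ≤ r := le_of_lt hr
      have hrpos : (0:ℝ) < r := lt_of_lt_of_le hR0 hr'
      have h1 : Real.exp (-q * φ r) ≤ m * Real.exp (-q * φ (r / δ)) := by
        have h2 : -q * φ r ≤ -q * L + -q * φ (r / δ) := by
          have := hφdiff r hr'
          nlinarith [hq0]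
        calc Real.exp (-q * φ r) ≤ Real.exp (-q * L + -q * φ (r / δ)) := Real.exp_le_exp.mpr h2
          _ = m * Real.exp (-q * φ (r / δ)) := by rw [Real.exp_add, hexpL]
      have h3 : Mp p (f n) r ^ q * Real.exp (-q * φ r) * r
          ≤ m * (Mp p (f n) r ^ q * Real.exp (-q * φ (r / δ)) * r) := by
        have hMq : (0:ℝ) ≤ Mp p (f n) r ^ q := Real.rpow_nonneg (Mp_nonneg _ _ _) _
        calc Mp p (f n) r ^ q * Real.exp (-q * φ r) * r
            ≤ Mp p (f n) r ^ q * (m * Real.exp (-q * φ (r / δ))) * r := by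
              apply mul_le_mul_of_nonneg_right _ hrpos.le
              exact mul_le_mul_of_nonneg_left h1 hMq
          _ = m * (Mp p (f n) r ^ q * Real.exp (-q * φ (r / δ)) * r) := by ring
      calc ENNReal.ofReal (Mp p (f n) r ^ q * Real.exp (-q * φ r) * r)
          ≤ ENNReal.ofReal (m * (Mp p (f n) r ^ q * Real.exp (-q * φ (r / δ)) * r)) :=
            ENNReal.ofReal_le_ofReal h3
        _ = ENNReal.ofReal m * ENNReal.ofReal (Mp p (f n) r ^ q * Real.exp (-q * φ (r / δ)) * r) :=
            ENNReal.ofReal_mul hm0.le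
    calc (∫⁻ r in Ioi R, ENNReal.ofReal (Mp p (f n) r ^ q * Real.exp (-q * φ r) * r))
        ≤ ∫⁻ r in Ioi R, ENNReal.ofReal m *
            ENNReal.ofReal (Mp p (f n) r ^ q * Real.exp (-q * φ (r / δ)) * r) := by
          apply setLIntegral_mono' measurableSet_Ioi hpt
      _ = ENNReal.ofReal m * ∫⁻ r in Ioi R,
            ENNReal.ofReal (Mp p (f n) r ^ q * Real.exp (-q * φ (r / δ)) * r) :=
          lintegral_const_mul' _ _ ENNReal.ofReal_ne_top
      _ ≤ ENNReal.ofReal m * ∫⁻ r in Ioi (0:ℝ),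
            ENNReal.ofReal (Mp p (f n) r ^ q * Real.exp (-q * φ (r / δ)) * r) :=
          mul_le_mul_right (lintegral_mono_set (Ioi_subset_Ioi hR0.le)) _
      _ ≤ η * (B ^ q + 1) := by
          apply mul_le_mul'
          · calc ENNReal.ofReal m ≤ ENNReal.ofReal η.toReal :=
                ENNReal.ofReal_le_ofReal (min_le_left _ _)
              _ = η := ENNReal.ofReal_toReal hηtop
          · exact (hIψ n).trans (le_self_add)
      _ = ε' / 2 := ENNReal.div_mul_cancel (by simp [hBq]) (by simp [hBq])
  -- compact part
  set η₂ : ℝ≥0∞ := ε' / 2 / (A + 1) with hη₂def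
  have hη₂0 : η₂ ≠ 0 := (ENNReal.div_pos hhalf0 (by simp [hAtop])).ne'
  have hη₂top : η₂ ≠ ⊤ := (ENNReal.div_lt_top hhalftop (by simp)).ne
  have hη₂t0 : 0 < η₂.toReal := ENNReal.toReal_pos hη₂0 hη₂top
  set m₂ : ℝ := min η₂.toReal 1 with hm₂def
  have hm₂0 : 0 < m₂ := lt_min hη₂t0 zero_lt_one
  set s : ℝ := m₂ ^ (1/q) with hsdef
  have hs0 : 0 < s := Real.rpow_pos_of_pos hm₂0 _
  have hsq : s ^ q = m₂ := by
    rw [hsdef, ← Real.rpow_mul hm₂0.le, one_div, inv_mul_cancel₀ hq0.ne', Real.rpow_one]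
  have hK : IsCompact (Metric.closedBall (0:ℂ) R) := isCompact_closedBall _ _
  have hev : ∀ᶠ n in atTop, ∀ x ∈ Metric.closedBall (0:ℂ) R, dist ((0:ℂ → ℂ) x) (f n x) < s :=
    (Metric.tendstoUniformlyOn_iff.mp (hunif _ hK)) s hs0
  filter_upwards [hev] with n hn
  have hMple : ∀ r ∈ Ioc (0:ℝ) R, Mp p (f n) r ≤ s := by
    intro r hr
    apply Mp_le hp (hf n).continuous hs0.le
    intro θ
    have hmem : ((r:ℂ) * Complex.exp ((θ:ℂ) * Complex.I)) ∈ Metric.closedBall (0:ℂ) R := by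
      simp only [Metric.mem_closedBall, dist_zero_right, norm_mul]
      rw [Complex.norm_exp_ofReal_mul_I,
        Complex.norm_real, Real.norm_eq_abs, abs_of_pos hr.1, mul_one]
      exact hr.2
    have := hn _ hmem
    rw [Pi.zero_apply, dist_zero_left] at this
    exact this.le
  have hcompact : (∫⁻ r in Ioc (0:ℝ) R,
      ENNReal.ofReal (Mp p (f n) r ^ q * Real.exp (-q * φ r) * r)) ≤ ε' / 2 := by
    have hpt : ∀ r ∈ Ioc (0:ℝ) R, ENNReal.ofReal (Mp p (f n) r ^ q * Real.exp (-q * φ r) * r)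
        ≤ ENNReal.ofReal m₂ * ENNReal.ofReal (Real.exp (-q * φ r) * r) := by
      intro r hr
      have h3 : Mp p (f n) r ^ q * Real.exp (-q * φ r) * r
          ≤ m₂ * (Real.exp (-q * φ r) * r) := by
        have h4 : Mp p (f n) r ^ q ≤ m₂ := by
          rw [← hsq]
          exact Real.rpow_le_rpow (Mp_nonneg _ _ _) (hMple r hr) hq0.le
        have h5 : (0:ℝ) ≤ Real.exp (-q * φ r) * r := mul_nonneg (Real.exp_nonneg _) hr.1.le
        calc Mp p (f n) r ^ q * Real.exp (-q * φ r) * r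
            = Mp p (f n) r ^ q * (Real.exp (-q * φ r) * r) := by ring
          _ ≤ m₂ * (Real.exp (-q * φ r) * r) := mul_le_mul_of_nonneg_right h4 h5
      calc ENNReal.ofReal (Mp p (f n) r ^ q * Real.exp (-q * φ r) * r)
          ≤ ENNReal.ofReal (m₂ * (Real.exp (-q * φ r) * r)) := ENNReal.ofReal_le_ofReal h3
        _ = ENNReal.ofReal m₂ * ENNReal.ofReal (Real.exp (-q * φ r) * r) :=
            ENNReal.ofReal_mul hm₂0.le
    calc (∫⁻ r in Ioc (0:ℝ) R, ENNReal.ofReal (Mp p (f n) r ^ q * Real.exp (-q * φ r) * r))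
        ≤ ∫⁻ r in Ioc (0:ℝ) R, ENNReal.ofReal m₂ * ENNReal.ofReal (Real.exp (-q * φ r) * r) :=
          setLIntegral_mono' measurableSet_Ioc hpt
      _ = ENNReal.ofReal m₂ * ∫⁻ r in Ioc (0:ℝ) R, ENNReal.ofReal (Real.exp (-q * φ r) * r) :=
          lintegral_const_mul' _ _ ENNReal.ofReal_ne_top
      _ ≤ η₂ * (A + 1) := by
          apply mul_le_mul'
          · calc ENNReal.ofReal m₂ ≤ ENNReal.ofReal η₂.toReal :=
                ENNReal.ofReal_le_ofReal (min_le_left _ _)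
              _ = η₂ := ENNReal.ofReal_toReal hη₂top
          · exact le_trans (lintegral_mono_set Ioc_subset_Ioi_self) le_self_add
      _ = ε' / 2 := ENNReal.div_mul_cancel (by simp [hAtop]) (by simp [hAtop])
  have hsplit : I n = (∫⁻ r in Ioc (0:ℝ) R,
      ENNReal.ofReal (Mp p (f n) r ^ q * Real.exp (-q * φ r) * r)) +
      ∫⁻ r in Ioi R, ENNReal.ofReal (Mp p (f n) r ^ q * Real.exp (-q * φ r) * r) := by
    rw [hI]
    simp only
    rw [← Ioc_union_Ioi_eq_Ioi hR0.le,
      lintegral_union measurableSet_Ioi (Ioc_disjoint_Ioi le_rfl)]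
  rw [hsplit]
  calc _ ≤ ε' / 2 + ε' / 2 := add_le_add hcompact (htail n)
    _ = ε' := ENNReal.add_halves _
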